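/- Let V be a finite ground set, let N ≥ 1, let λ ∈ [0, 1], let m^(0), m^(1), …, m^(N) be modular set functions with nonnegative weights, and let φ : [0, ∞) → [0, ∞) be nondecreasing and concave. Define the recursion F^(0)(S) := m^(0)(S) and F^(n)(S) := φ(λ · F^(n−1)(S) + (1 − λ) · m^(n)(S)) for 1 ≤ n ≤ N. Then F^(N) is a monotone submodular set function. -/

import Mathlib

/-- Marginal gain `F(s|S) = F(S ∪ {s}) − F(S)`. A set function is *monotone* if all marginal
gains are nonnegative. -/
def IsMonotoneSetFun {V : Type*} [DecidableEq V] (F : Finset V → ℝ) : Prop :=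
  ∀ (S : Finset V) (s : V), s ∉ S → 0 ≤ F (insert s S) - F S

/-- A set function is *submodular* if `F(s|S) ≥ F(s|T)` whenever `S ⊆ T` and `s ∉ T`. -/
def IsSubmodular {V : Type*} [DecidableEq V] (F : Finset V → ℝ) : Prop :=
  ∀ (S T : Finset V) (s : V), S ⊆ T → s ∉ T →
    F (insert s T) - F T ≤ F (insert s S) - F S

/-- Concave functions have decreasing increments: for `0 ≤ x ≤ y` and `d ≥ 0`,
`φ(y+d) − φ(y) ≤ φ(x+d) − φ(x)`. -/
lemma concave_shift_le {φ : ℝ → ℝ} (hconc : ConcaveOn ℝ (Set.Ici 0) φ)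
    {x y d : ℝ} (hx : 0 ≤ x) (hxy : x ≤ y) (hd : 0 ≤ d) :
    φ (y + d) - φ y ≤ φ (x + d) - φ x := by
  rcases eq_or_lt_of_le hd with rfl | hd'
  · simp
  rcases eq_or_lt_of_le hxy with rfl | hxy'
  · simp
  have hy : 0 ≤ y := hx.trans hxy
  have hden : 0 < y + d - x := by linarith
  set t : ℝ := d / (y + d - x) with ht
  have ht0 : 0 < t := div_pos hd' hden
  have ht1 : t < 1 := (div_lt_one hden).mpr (by linarith)
  have hsum : (1 - t) + t = 1 := by ring
  have h1 : (1 - t) • x + t • (y + d) = x + d := by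
    field_simp [ht]
    have htd : t * (y + d - x) = d := by rw [ht]; exact div_mul_cancel₀ d hden.ne'
    linear_combination htd
  have h2 : t • x + (1 - t) • (y + d) = y := by
    field_simp [ht]
    have htd : t * (y + d - x) = d := by rw [ht]; exact div_mul_cancel₀ d hden.ne'
    linear_combination -htd
  have hxI : x ∈ Set.Ici (0:ℝ) := hx
  have hydI : y + d ∈ Set.Ici (0:ℝ) := by simp; linarith
  have hA := hconc.2 hxI hydI (by linarith : (0:ℝ) ≤ 1 - t) ht0.le hsum
  have hB := hconc.2 hxI hydI ht0.le (by linarith : (0:ℝ) ≤ 1 - t) (by ring)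
  rw [h1] at hA
  rw [h2] at hB
  simp only [smul_eq_mul] at hA hB
  linarith

/-- If all single-element marginal gains are nonnegative, the set function is monotone
with respect to inclusion. -/
lemma le_of_subset_of_insert_gains {V : Type*} [DecidableEq V] {H : Finset V → ℝ}
    (h : ∀ (S : Finset V) (s : V), s ∉ S → 0 ≤ H (insert s S) - H S)
    {U W : Finset V} (hUW : U ⊆ W) : H U ≤ H W := by
  have main : ∀ (D U : Finset V), H U ≤ H (U ∪ D) := by
    intro D
    induction D using Finset.induction_on with
    | empty => simp
    | @insert y D hy ih =>
      intro U
      by_cases hyU : y ∈ U ∪ D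
      · have e : U ∪ insert y D = U ∪ D := by
          ext z; simp only [Finset.mem_union, Finset.mem_insert] at *
          constructor
          · rintro (h1 | rfl | h2) <;> simp_all
          · tauto
        rw [e]; exact ih U
      · have e : U ∪ insert y D = insert y (U ∪ D) := by
          ext z; simp only [Finset.mem_union, Finset.mem_insert]; tauto
        rw [e]
        have h1 := h (U ∪ D) y hyU
        have h2 := ih U
        linarith
  have := main W U
  rwa [Finset.union_eq_right.mpr hUW] at this

theorem recursive_model_monotone_submodular
    {V : Type*} [Fintype V] [DecidableEq V]
    (N : ℕ) (hN : 1 ≤ N)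
    (lam : ℝ) (hlam : lam ∈ Set.Icc (0 : ℝ) 1)
    (w : ℕ → V → ℝ) (hw : ∀ n v, 0 ≤ w n v)
    (φ : ℝ → ℝ)
    (hφ_mono : MonotoneOn φ (Set.Ici 0))
    (hφ_conc : ConcaveOn ℝ (Set.Ici 0) φ)
    (hφ_nonneg : ∀ x ∈ Set.Ici (0 : ℝ), 0 ≤ φ x)
    (F : ℕ → Finset V → ℝ)
    (hF0 : ∀ S, F 0 S = ∑ s ∈ S, w 0 s)
    (hFrec : ∀ n, 1 ≤ n → n ≤ N → ∀ S : Finset V,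
      F n S = φ (lam * F (n - 1) S + (1 - lam) * ∑ s ∈ S, w n s)) :
    IsMonotoneSetFun (F N) ∧ IsSubmodular (F N) := by
  obtain ⟨hl0, hl1⟩ := hlam
  have key : ∀ n, n ≤ N →
      (∀ S, 0 ≤ F n S) ∧ IsMonotoneSetFun (F n) ∧ IsSubmodular (F n) := by
    intro n
    induction n with
    | zero =>
      intro _
      refine ⟨fun S => by rw [hF0]; exact Finset.sum_nonneg (fun s _ => hw 0 s), ?_, ?_⟩
      · intro S s hs
        rw [hF0, hF0, Finset.sum_insert hs]
        simpa using hw 0 s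
      · intro S T s hST hsT
        have hsS : s ∉ S := fun h => hsT (hST h)
        rw [hF0, hF0, hF0, hF0, Finset.sum_insert hsT, Finset.sum_insert hsS]
        simp
    | succ n ih =>
      intro hle
      have hn : n ≤ N := by omega
      obtain ⟨hnn, hmono, hsub⟩ := ih hn
      set G : Finset V → ℝ := fun S => lam * F n S + (1 - lam) * ∑ s ∈ S, w (n+1) s
        with hG
      have hGnn : ∀ S, 0 ≤ G S := fun S =>
        add_nonneg (mul_nonneg hl0 (hnn S))
          (mul_nonneg (by linarith) (Finset.sum_nonneg (fun s _ => hw _ s)))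
      have hGmono : ∀ (S : Finset V) (s : V), s ∉ S → 0 ≤ G (insert s S) - G S := by
        intro S s hs
        have h1 := hmono S s hs
        have h2 : (∑ x ∈ insert s S, w (n+1) x) - ∑ x ∈ S, w (n+1) x = w (n+1) s := by
          rw [Finset.sum_insert hs]; ring
        have := hw (n+1) s
        simp only [hG]
        nlinarith
      have hGsub : ∀ (S T : Finset V) (s : V), S ⊆ T → s ∉ T →
          G (insert s T) - G T ≤ G (insert s S) - G S := by
        intro S T s hST hsT
        have hsS : s ∉ S := fun h => hsT (hST h)
        have h1 := hsub S T s hST hsT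
        have h2 : (∑ x ∈ insert s S, w (n+1) x) - ∑ x ∈ S, w (n+1) x = w (n+1) s := by
          rw [Finset.sum_insert hsS]; ring
        have h3 : (∑ x ∈ insert s T, w (n+1) x) - ∑ x ∈ T, w (n+1) x = w (n+1) s := by
          rw [Finset.sum_insert hsT]; ring
        simp only [hG]
        nlinarith
      have hFeq : ∀ S, F (n+1) S = φ (G S) := by
        intro S
        have := hFrec (n+1) (by omega) hle S
        simpa [hG] using this
      refine ⟨fun S => by rw [hFeq]; exact hφ_nonneg _ (hGnn S), ?_, ?_⟩
      · intro S s hs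
        rw [hFeq, hFeq]
        have h := hGmono S s hs
        have := hφ_mono (hGnn S) (hGnn (insert s S)) (by linarith)
        linarith
      · intro S T s hST hsT
        have hsS : s ∉ S := fun h => hsT (hST h)
        rw [hFeq, hFeq, hFeq, hFeq]
        set a := G S
        set b := G T
        have hab : a ≤ b := le_of_subset_of_insert_gains hGmono hST
        have hdT : 0 ≤ G (insert s T) - b := hGmono T s hsT
        have hdle : G (insert s T) - b ≤ G (insert s S) - a := hGsub S T s hST hsT
        set d := G (insert s T) - b with hd
        have e1 : G (insert s T) = b + d := by ring
        have key1 : φ (b + d) - φ b ≤ φ (a + d) - φ a :=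
          concave_shift_le hφ_conc (hGnn S) hab hdT
        have key2 : φ (a + d) ≤ φ (G (insert s S)) := by
          apply hφ_mono
          · simp only [Set.mem_Ici]; have := hGnn S; linarith
          · exact hGnn (insert s S)
          · linarith
        rw [e1]
        linarith
  obtain ⟨_, h1, h2⟩ := key N le_rfl
  exact ⟨h1, h2⟩
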